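/- Expression of the subcritical cross-covariance through the triangle kernel: for f_k, f_ℓ ∈ ℬ(S³) with Pf_k, Pf_ℓ well defined, and r ≥ 1, k > ℓ ≥ 0, ⟨μ^△, P^△((Q^△)^r f̃_k ⊗ (Q^△)^{k−ℓ+r} f̃_ℓ)⟩ = ⟨μ, P(Q^r(P f̃_k) ⊗ Q^{k−ℓ+r}(P f̃_ℓ))⟩, where f̃ = f − ⟨μ, Pf⟩. -/

import Mathlib

open MeasureTheory ProbabilityTheory Filter

/-- For `f : S³ → ℝ`, `(Pf)(x) = ∫ f(x,y,z) P(x,dy,dz)`. -/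
noncomputable def kerP3 {S : Type*} [MeasurableSpace S]
    (P : ProbabilityTheory.Kernel S (S × S)) (f : S × S × S → ℝ) : S → ℝ :=
  fun x => ∫ yz, f (x, yz.1, yz.2) ∂(P x)

/-- For `h : S² → ℝ`, `(Ph)(x) = ∫ h(y,z) P(x,dy,dz)`. -/
noncomputable def kerP2 {S : Type*} [MeasurableSpace S]
    (P : ProbabilityTheory.Kernel S (S × S)) (h : S × S → ℝ) : S → ℝ :=
  fun x => ∫ yz, h yz ∂(P x)

/-- First marginal `P₀`. -/
noncomputable def kerP0 {S : Type*} [MeasurableSpace S]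
    (P : ProbabilityTheory.Kernel S (S × S)) (f : S → ℝ) : S → ℝ :=
  fun x => ∫ yz, f yz.1 ∂(P x)

/-- Second marginal `P₁`. -/
noncomputable def kerP1 {S : Type*} [MeasurableSpace S]
    (P : ProbabilityTheory.Kernel S (S × S)) (f : S → ℝ) : S → ℝ :=
  fun x => ∫ yz, f yz.2 ∂(P x)

/-- `Q = (P₀ + P₁)/2`. -/
noncomputable def kerQ {S : Type*} [MeasurableSpace S]
    (P : ProbabilityTheory.Kernel S (S × S)) (f : S → ℝ) : S → ℝ :=
  fun x => (kerP0 P f x + kerP1 P f x) / 2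

/-- The triangle kernel `Q^△` acting on functions on `S³`:
`(Q^△ f)(x,x₀,x₁) = (1/2)((P f)(x₀) + (P f)(x₁))`. -/
noncomputable def kerQtri {S : Type*} [MeasurableSpace S]
    (P : ProbabilityTheory.Kernel S (S × S)) (f : S × S × S → ℝ) : S × S × S → ℝ :=
  fun p => (kerP3 P f p.2.1 + kerP3 P f p.2.2) / 2

/-- `⟨μ^△, f⟩ = ∫ ∫ f(x,x₀,x₁) P(x,dx₀,dx₁) μ(dx)` where `μ^△(dx dx₀ dx₁) = μ(dx)P(x,dx₀,dx₁)`. -/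
noncomputable def muTri {S : Type*} [MeasurableSpace S] (μ : MeasureTheory.Measure S)
    (P : ProbabilityTheory.Kernel S (S × S)) (f : S × S × S → ℝ) : ℝ :=
  ∫ x, kerP3 P f x ∂μ

/-- The triangle kernel `P^△` acting on functions on `S³ × S³`:
`(P^△ G)(x,x₀,x₁) = ∫∫ G((x₀,y₀,y₁),(x₁,z₀,z₁)) P(x₀,dy₀dy₁) P(x₁,dz₀dz₁)`. -/
noncomputable def kerPtri {S : Type*} [MeasurableSpace S]
    (P : ProbabilityTheory.Kernel S (S × S)) (G : (S × S × S) × (S × S × S) → ℝ) :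
    S × S × S → ℝ :=
  fun p => ∫ yz, (∫ wz, G ((p.2.1, yz.1, yz.2), (p.2.2, wz.1, wz.2)) ∂(P p.2.2)) ∂(P p.2.1)

section Aux

variable {S : Type*} [MeasurableSpace S] (P : Kernel S (S × S)) [IsMarkovKernel P]

private lemma intg_of_bdd {α : Type*} [MeasurableSpace α] (ν : Measure α)
    [IsProbabilityMeasure ν] {g : α → ℝ} (hm : Measurable g) {C : ℝ}
    (hb : ∀ x, |g x| ≤ C) : Integrable g ν :=
  (integrable_const C).mono' hm.aestronglyMeasurable
    (ae_of_all _ fun x => by simpa [Real.norm_eq_abs] using hb x)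

private lemma abs_integral_le {α : Type*} [MeasurableSpace α] (ν : Measure α)
    [IsProbabilityMeasure ν] {g : α → ℝ} {C : ℝ} (hb : ∀ x, |g x| ≤ C) :
    |∫ x, g x ∂ν| ≤ C := by
  have := norm_integral_le_of_norm_le_const (μ := ν) (f := g) (C := C)
    (ae_of_all _ fun x => by simpa [Real.norm_eq_abs] using hb x)
  simpa [Real.norm_eq_abs, measure_univ] using this

private lemma kerP3_meas {f : S × S × S → ℝ} (hm : Measurable f) :
    Measurable (kerP3 P f) := by
  have h : Measurable fun q : S × (S × S) => f (q.1, q.2.1, q.2.2) :=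
    hm.comp (by fun_prop)
  exact (h.stronglyMeasurable.integral_kernel_prod_right' (κ := P)).measurable

private lemma kerP3_bdd {f : S × S × S → ℝ} {C : ℝ} (hb : ∀ p, |f p| ≤ C) :
    ∀ x, |kerP3 P f x| ≤ C := fun x =>
  abs_integral_le (P x) (fun yz => hb _)

private lemma kerQ_meas {h : S → ℝ} (hm : Measurable h) :
    Measurable (kerQ P h) := by
  have h0 : Measurable (kerP0 P h) := by
    have hmeas : Measurable fun q : S × (S × S) => h q.2.1 := hm.comp (by fun_prop)
    exact (hmeas.stronglyMeasurable.integral_kernel_prod_right' (κ := P)).measurable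
  have h1 : Measurable (kerP1 P h) := by
    have hmeas : Measurable fun q : S × (S × S) => h q.2.2 := hm.comp (by fun_prop)
    exact (hmeas.stronglyMeasurable.integral_kernel_prod_right' (κ := P)).measurable
  exact (h0.add h1).div_const 2

private lemma kerQ_bdd {h : S → ℝ} {C : ℝ} (hb : ∀ x, |h x| ≤ C) :
    ∀ x, |kerQ P h x| ≤ C := by
  intro x
  have h0 : |kerP0 P h x| ≤ C := abs_integral_le (P x) (fun yz => hb _)
  have h1 : |kerP1 P h x| ≤ C := abs_integral_le (P x) (fun yz => hb _)
  have hC : 0 ≤ C := (abs_nonneg _).trans (h0)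
  calc |(kerP0 P h x + kerP1 P h x) / 2| = |kerP0 P h x + kerP1 P h x| / 2 := by
        rw [abs_div, abs_two]
    _ ≤ (|kerP0 P h x| + |kerP1 P h x|) / 2 := by gcongr; exact abs_add_le _ _
    _ ≤ (C + C) / 2 := by gcongr
    _ = C := by ring

private lemma kerQ_iter_meas {h : S → ℝ} (hm : Measurable h) (n : ℕ) :
    Measurable ((kerQ P)^[n] h) := by
  induction n with
  | zero => exact hm
  | succ n ih => rw [Function.iterate_succ_apply']; exact kerQ_meas P ih

private lemma kerQ_iter_bdd {h : S → ℝ} {C : ℝ} (hb : ∀ x, |h x| ≤ C) (n : ℕ) :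
    ∀ x, |(kerQ P)^[n] h x| ≤ C := by
  induction n with
  | zero => exact hb
  | succ n ih => rw [Function.iterate_succ_apply']; exact kerQ_bdd P ih

/-- The core computation: `P` applied to `(h ⊕ h)/2` on `S³` equals `Q h`. -/
private lemma kerP3_pair {h : S → ℝ} {C : ℝ} (hm : Measurable h) (hb : ∀ x, |h x| ≤ C) :
    kerP3 P (fun p => (h p.2.1 + h p.2.2) / 2) = kerQ P h := by
  funext x
  have h1 : Integrable (fun yz : S × S => h yz.1) (P x) :=
    intg_of_bdd (P x) (hm.comp measurable_fst) (fun yz => hb _)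
  have h2 : Integrable (fun yz : S × S => h yz.2) (P x) :=
    intg_of_bdd (P x) (hm.comp measurable_snd) (fun yz => hb _)
  simp only [kerP3, kerQ, kerP0, kerP1]
  rw [integral_div, integral_add h1 h2]


private lemma pair_integral {h : S → ℝ} {C : ℝ} (hm : Measurable h) (hb : ∀ x, |h x| ≤ C)
    (x : S) : (∫ yz : S × S, (h yz.1 + h yz.2) / 2 ∂(P x)) = kerQ P h x :=
  congrFun (kerP3_pair P hm hb) x

/-- `(Q^△)^(n+1) f = (Q^n (P f) ⊕ Q^n (P f)) / 2`. -/
private lemma kerQtri_iter {f : S × S × S → ℝ} {C : ℝ}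
    (hm : Measurable f) (hb : ∀ p, |f p| ≤ C) (n : ℕ) :
    (kerQtri P)^[n + 1] f =
      fun p => ((kerQ P)^[n] (kerP3 P f) p.2.1 + (kerQ P)^[n] (kerP3 P f) p.2.2) / 2 := by
  induction n with
  | zero => simp only [Function.iterate_one, Function.iterate_zero, id]; rfl
  | succ n ih =>
    rw [Function.iterate_succ_apply', ih]
    have hm' : Measurable ((kerQ P)^[n] (kerP3 P f)) :=
      kerQ_iter_meas P (kerP3_meas P hm) n
    have hb' : ∀ x, |(kerQ P)^[n] (kerP3 P f) x| ≤ C :=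
      kerQ_iter_bdd P (kerP3_bdd P hb) n
    funext p
    simp only [kerQtri, kerP3_pair P hm' hb']
    rw [Function.iterate_succ_apply']

end Aux

/-- Expression of the subcritical cross-covariance through the triangle kernel: for
`r ≥ 1`, `k > ℓ ≥ 0`,
`⟨μ^△, P^△((Q^△)^r f̃_k ⊗ (Q^△)^{k−ℓ+r} f̃_ℓ)⟩ = ⟨μ, P(Q^r(P f̃_k) ⊗ Q^{k−ℓ+r}(P f̃_ℓ))⟩`,
where `f̃ = f − ⟨μ, Pf⟩` and `μ` is invariant for `Q`. -/
theorem cross_covariance_triangle {S : Type*} [MeasurableSpace S]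
    (P : Kernel S (S × S)) [IsMarkovKernel P]
    (μ : Measure S) [IsProbabilityMeasure μ]
    (hinv : ∀ h : S → ℝ, Measurable h → (∃ C, ∀ y, |h y| ≤ C) →
      ∫ x, kerQ P h x ∂μ = ∫ x, h x ∂μ)
    (fk fl : S × S × S → ℝ)
    (hfkm : Measurable fk) (hfkb : ∃ C, ∀ p, |fk p| ≤ C)
    (hflm : Measurable fl) (hflb : ∃ C, ∀ p, |fl p| ≤ C)
    (r k ℓ : ℕ) (hr : 1 ≤ r) (hkl : ℓ < k) :
    muTri μ P (kerPtri P (fun q =>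
        ((kerQtri P)^[r] (fun p => fk p - ∫ x, kerP3 P fk x ∂μ)) q.1 *
        ((kerQtri P)^[k - ℓ + r] (fun p => fl p - ∫ x, kerP3 P fl x ∂μ)) q.2))
      = ∫ x, kerP2 P (fun yz =>
            (kerQ P)^[r] (kerP3 P (fun p => fk p - ∫ y, kerP3 P fk y ∂μ)) yz.1 *
            (kerQ P)^[k - ℓ + r] (kerP3 P (fun p => fl p - ∫ y, kerP3 P fl y ∂μ)) yz.2)
          x ∂μ := by
  classical
  obtain ⟨Ck, hCk⟩ := hfkb
  obtain ⟨Cl, hCl⟩ := hflb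
  obtain ⟨r', rfl⟩ : ∃ r', r = r' + 1 := ⟨r - 1, (Nat.succ_pred_eq_of_pos hr).symm⟩
  set ck := ∫ x, kerP3 P fk x ∂μ with hckdef
  set cl := ∫ x, kerP3 P fl x ∂μ with hcldef
  set ftk : S × S × S → ℝ := fun p => fk p - ck with hftkdef
  set ftl : S × S × S → ℝ := fun p => fl p - cl with hftldef
  have hftkm : Measurable ftk := hfkm.sub measurable_const
  have hftlm : Measurable ftl := hflm.sub measurable_const
  have hftkb : ∀ p, |ftk p| ≤ Ck + |ck| := fun p => by
    have : |fk p - ck| ≤ |fk p| + |ck| := abs_sub _ _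
    exact this.trans (add_le_add_left (hCk p) _)
  have hftlb : ∀ p, |ftl p| ≤ Cl + |cl| := fun p => by
    have : |fl p - cl| ≤ |fl p| + |cl| := abs_sub _ _
    exact this.trans (add_le_add_left (hCl p) _)
  set g1 := (kerQ P)^[r'] (kerP3 P ftk) with hg1def
  set g2 := (kerQ P)^[k - ℓ + r'] (kerP3 P ftl) with hg2def
  have hg1m : Measurable g1 := kerQ_iter_meas P (kerP3_meas P hftkm) r'
  have hg1b : ∀ x, |g1 x| ≤ Ck + |ck| := kerQ_iter_bdd P (kerP3_bdd P hftkb) r'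
  have hg2m : Measurable g2 := kerQ_iter_meas P (kerP3_meas P hftlm) _
  have hg2b : ∀ x, |g2 x| ≤ Cl + |cl| := kerQ_iter_bdd P (kerP3_bdd P hftlb) _
  have e1 : (kerQtri P)^[r' + 1] ftk = fun p => (g1 p.2.1 + g1 p.2.2) / 2 :=
    kerQtri_iter P hftkm hftkb r'
  have e2 : (kerQtri P)^[k - ℓ + (r' + 1)] ftl = fun p => (g2 p.2.1 + g2 p.2.2) / 2 := by
    rw [show k - ℓ + (r' + 1) = (k - ℓ + r') + 1 by omega]
    exact kerQtri_iter P hftlm hftlb _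
  have eg1 : (kerQ P)^[r' + 1] (kerP3 P ftk) = kerQ P g1 :=
    Function.iterate_succ_apply' (kerQ P) r' (kerP3 P ftk)
  have eg2 : (kerQ P)^[k - ℓ + (r' + 1)] (kerP3 P ftl) = kerQ P g2 := by
    rw [show k - ℓ + (r' + 1) = (k - ℓ + r') + 1 by omega]
    exact Function.iterate_succ_apply' (kerQ P) _ (kerP3 P ftl)
  have key : kerPtri P (fun q =>
        (g1 q.1.2.1 + g1 q.1.2.2) / 2 * ((g2 q.2.2.1 + g2 q.2.2.2) / 2))
      = fun p => kerQ P g1 p.2.1 * kerQ P g2 p.2.2 := by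
    funext p
    simp only [kerPtri]
    have e : ∀ yz : S × S,
        (∫ wz : S × S, (g1 yz.1 + g1 yz.2) / 2 * ((g2 wz.1 + g2 wz.2) / 2) ∂(P p.2.2))
          = (g1 yz.1 + g1 yz.2) / 2 * kerQ P g2 p.2.2 := fun yz => by
      rw [integral_const_mul, pair_integral P hg2m hg2b]
    simp only [e]
    rw [integral_mul_const, pair_integral P hg1m hg1b]
  simp only [e1, e2, eg1, eg2]
  rw [key]
  rfl
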